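/- There exists a constant C > 0 with the following property. Let M ≥ 1 and let c_1,…,c_12, d_1,…,d_12 be integers with |c_i| ≤ M, |d_i| ≤ M and (c_i,d_i) ≠ (0,0) for all i, and suppose that for every index i the number of indices j ∈ {1,…,12} with c_id_j = c_jd_i is at most 5. For (β₁, β₂) ∈ ℝ² write μ_i = c_iβ₁ + d_iβ₂. Then for every real P ≥ 2 and every real τ ≥ 0: (1) the integral of ∏_{i=1}^{12} P/(1+P³|μ_i|) over the region {(β₁,β₂) ∈ ℝ² : max(|β₁|,|β₂|) > P^{τ−3}} is at most C·P^{6−5τ}·M^{11}; (2) the integral of ∏_{i=1}^{12} P/(1+P³|μ_i|) over all of ℝ² is at most C·P⁶·M^{11}; (3) for every index i₀ ∈ {1,…,12}, the integral of ∏_{i≠i₀} P/(1+P³|μ_i|) over all of ℝ² is at most C·P⁵·M^{10}. -/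

import Mathlib

open MeasureTheory Real

lemma key1 (P : ℝ) (hP : 0 < P) :
    Integrable (fun u : ℝ => (P / (1 + P ^ 3 * |u|)) ^ 2) ∧
    (∫ u : ℝ, (P / (1 + P ^ 3 * |u|)) ^ 2) ≤ π / P := by
  have hP3 : (0:ℝ) < P ^ 3 := by positivity
  have hbar : Integrable (fun u : ℝ => P ^ 2 * (1 + (P ^ 3 * u) ^ 2)⁻¹) :=
    (integrable_inv_one_add_sq.comp_mul_left' hP3.ne').const_mul _
  have hle : ∀ u : ℝ, (P / (1 + P ^ 3 * |u|)) ^ 2 ≤ P ^ 2 * (1 + (P ^ 3 * u) ^ 2)⁻¹ := by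
    intro u
    have h1 : (0:ℝ) < 1 + (P ^ 3 * u) ^ 2 := by positivity
    have h2 : (0:ℝ) < 1 + P ^ 3 * |u| := by positivity
    have hsq : (P ^ 3 * |u|) ^ 2 = (P ^ 3 * u) ^ 2 := by
      rw [mul_pow, mul_pow, sq_abs]
    have h3 : (1:ℝ) + (P ^ 3 * u) ^ 2 ≤ (1 + P ^ 3 * |u|) ^ 2 := by
      nlinarith [mul_nonneg hP3.le (abs_nonneg u)]
    rw [div_pow, ← div_eq_mul_inv]
    gcongr
  have hcont : Continuous fun u : ℝ => (P / (1 + P ^ 3 * |u|)) ^ 2 := by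
    apply Continuous.pow
    exact continuous_const.div (by fun_prop) (fun x => by positivity)
  have hnn : ∀ u : ℝ, 0 ≤ (P / (1 + P ^ 3 * |u|)) ^ 2 := fun u => by positivity
  have hint : Integrable (fun u : ℝ => (P / (1 + P ^ 3 * |u|)) ^ 2) := by
    refine hbar.mono hcont.aestronglyMeasurable (ae_of_all _ fun u => ?_)
    rw [Real.norm_eq_abs, Real.norm_eq_abs, abs_of_nonneg (hnn u),
      abs_of_nonneg (by positivity : (0:ℝ) ≤ P ^ 2 * (1 + (P ^ 3 * u) ^ 2)⁻¹)]
    exact hle u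
  refine ⟨hint, ?_⟩
  have h1 : (∫ u : ℝ, (P / (1 + P ^ 3 * |u|)) ^ 2) ≤
      ∫ u : ℝ, P ^ 2 * (1 + (P ^ 3 * u) ^ 2)⁻¹ := integral_mono hint hbar hle
  have h2 : (∫ u : ℝ, P ^ 2 * (1 + (P ^ 3 * u) ^ 2)⁻¹) = P ^ 2 * ((P ^ 3)⁻¹ * π) := by
    rw [integral_const_mul]
    have := Measure.integral_comp_mul_left (fun x : ℝ => (1 + x ^ 2)⁻¹) (P ^ 3)
    simp only [smul_eq_mul] at this
    rw [this, integral_univ_inv_one_add_sq, abs_of_nonneg (by positivity : (0:ℝ) ≤ (P^3)⁻¹)]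
  rw [h2] at h1
  calc (∫ u : ℝ, (P / (1 + P ^ 3 * |u|)) ^ 2) ≤ P ^ 2 * ((P ^ 3)⁻¹ * π) := h1
    _ = π / P := by field_simp

lemma key2 (P : ℝ) (hP : 0 < P) {c₁ d₁ c₂ d₂ : ℤ} (h : c₁ * d₂ ≠ c₂ * d₁) :
    Integrable (fun β : ℝ × ℝ =>
      (P / (1 + P ^ 3 * |(c₁ : ℝ) * β.1 + (d₁ : ℝ) * β.2|)) ^ 2 *
      (P / (1 + P ^ 3 * |(c₂ : ℝ) * β.1 + (d₂ : ℝ) * β.2|)) ^ 2) ∧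
    (∫ β : ℝ × ℝ,
      (P / (1 + P ^ 3 * |(c₁ : ℝ) * β.1 + (d₁ : ℝ) * β.2|)) ^ 2 *
      (P / (1 + P ^ 3 * |(c₂ : ℝ) * β.1 + (d₂ : ℝ) * β.2|)) ^ 2) ≤ π ^ 2 / P ^ 2 := by
  obtain ⟨hF_int, hF_le⟩ := key1 P hP
  set F : ℝ → ℝ := fun u => (P / (1 + P ^ 3 * |u|)) ^ 2 with hF
  set L : (ℝ × ℝ) →ₗ[ℝ] ℝ × ℝ :=
    Matrix.toLin (Module.Basis.finTwoProd ℝ) (Module.Basis.finTwoProd ℝ) !![(c₁:ℝ), d₁; (c₂:ℝ), d₂] with hL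
  have hLapp : ∀ β : ℝ × ℝ, L β = ((c₁:ℝ) * β.1 + (d₁:ℝ) * β.2, (c₂:ℝ) * β.1 + (d₂:ℝ) * β.2) := by
    intro β
    rw [hL, Matrix.toLin_finTwoProd_apply]
  have hD : ((c₁ * d₂ - c₂ * d₁ : ℤ) : ℝ) ≠ 0 :=
    Int.cast_ne_zero.2 (sub_ne_zero.2 h)
  have hdet : LinearMap.det L = ((c₁ * d₂ - c₂ * d₁ : ℤ) : ℝ) := by
    rw [hL, LinearMap.det_toLin, Matrix.det_fin_two_of]
    push_cast
    ring
  have hdetne : LinearMap.det L ≠ 0 := by rw [hdet]; exact hD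
  have habs : |(LinearMap.det L)⁻¹| ≤ 1 := by
    rw [abs_inv]
    rw [hdet]
    have h1 : (1:ℝ) ≤ |((c₁ * d₂ - c₂ * d₁ : ℤ) : ℝ)| := by
      rw [← Int.cast_abs]
      exact_mod_cast Int.one_le_abs (sub_ne_zero.2 h)
    exact inv_le_one_of_one_le₀ h1
  have hFcont : Continuous F := by
    apply Continuous.pow
    exact continuous_const.div (by fun_prop) (fun x => by positivity)
  have hh_cont : Continuous (fun p : ℝ × ℝ => F p.1 * F p.2) :=
    (hFcont.comp continuous_fst).mul (hFcont.comp continuous_snd)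
  have hh_int : Integrable (fun p : ℝ × ℝ => F p.1 * F p.2) := by
    rw [MeasureTheory.Measure.volume_eq_prod]
    exact hF_int.mul_prod hF_int
  have hmap : Measure.map L volume = ENNReal.ofReal |(LinearMap.det L)⁻¹| • volume :=
    Measure.map_linearMap_addHaar_eq_smul_addHaar volume hdetne
  have hLmeas : Measurable L := L.continuous_of_finiteDimensional.measurable
  have heq : (fun β : ℝ × ℝ =>
      (P / (1 + P ^ 3 * |(c₁ : ℝ) * β.1 + (d₁ : ℝ) * β.2|)) ^ 2 *
      (P / (1 + P ^ 3 * |(c₂ : ℝ) * β.1 + (d₂ : ℝ) * β.2|)) ^ 2) =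
      (fun p : ℝ × ℝ => F p.1 * F p.2) ∘ L := by
    funext β
    simp only [Function.comp_apply, hLapp β, hF]
  have hint : Integrable ((fun p : ℝ × ℝ => F p.1 * F p.2) ∘ L) := by
    rw [← integrable_map_measure hh_cont.aestronglyMeasurable hLmeas.aemeasurable, hmap]
    exact hh_int.smul_measure ENNReal.ofReal_ne_top
  constructor
  · rw [heq]; exact hint
  · rw [heq]
    have h1 : ∫ β : ℝ × ℝ, ((fun p : ℝ × ℝ => F p.1 * F p.2) ∘ L) β =
        ∫ p, F p.1 * F p.2 ∂(Measure.map L volume) :=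
      (integral_map hLmeas.aemeasurable hh_cont.aestronglyMeasurable).symm
    rw [h1, hmap, integral_smul_measure, ENNReal.toReal_ofReal (abs_nonneg _)]
    have h2 : ∫ p : ℝ × ℝ, F p.1 * F p.2 = (∫ u, F u) * (∫ u, F u) := by
      rw [MeasureTheory.Measure.volume_eq_prod]
      exact integral_prod_mul F F
    rw [h2, smul_eq_mul]
    have hFnn : 0 ≤ ∫ u, F u := integral_nonneg (fun u => by rw [hF]; positivity)
    have hπ : 0 < π / P := div_pos pi_pos hP
    calc |(LinearMap.det L)⁻¹| * ((∫ u, F u) * (∫ u, F u))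
        ≤ 1 * ((π / P) * (π / P)) := by
          apply mul_le_mul habs (mul_le_mul hF_le hF_le hFnn hπ.le)
            (mul_nonneg hFnn hFnn) zero_le_one
      _ = π ^ 2 / P ^ 2 := by field_simp

lemma select (c d : Fin 12 → ℤ)
    (h5 : ∀ i, (Finset.univ.filter (fun j => c i * d j = c j * d i)).card ≤ 5)
    (s : Finset (Fin 12)) (hs : 7 ≤ s.card) (f : Fin 12 → ℝ) (P : ℝ)
    (h0 : ∀ i, 0 ≤ f i) (h1 : ∀ i, f i ≤ P) :
    ∃ a ∈ s, ∃ b ∈ s, ¬(c a * d b = c b * d a) ∧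
      ∏ i ∈ s, f i ≤ f a ^ 2 * f b ^ 2 * P ^ (s.card - 4) := by
  have hP0 : 0 ≤ P := le_trans (h0 ⟨0, by norm_num⟩) (h1 _)
  have hsne : s.Nonempty := Finset.card_pos.1 (by omega)
  obtain ⟨a, ha, hamax⟩ := s.exists_max_image f hsne
  set B := s.filter (fun j => c a * d j = c j * d a) with hB
  have hBcard : B.card ≤ 5 := by
    refine le_trans (Finset.card_le_card ?_) (h5 a)
    exact Finset.filter_subset_filter _ (Finset.subset_univ s)
  have hBsub : B ⊆ s := Finset.filter_subset _ _
  have hsB : 2 ≤ (s \ B).card := by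
    rw [Finset.card_sdiff_of_subset hBsub]; omega
  obtain ⟨b, hb, hbmax⟩ := (s \ B).exists_max_image f
    (Finset.card_pos.1 (by omega))
  have hbs : b ∈ s := (Finset.mem_sdiff.1 hb).1
  have hbnB : b ∉ B := (Finset.mem_sdiff.1 hb).2
  have hnp : ¬(c a * d b = c b * d a) := fun hcon => hbnB (Finset.mem_filter.2 ⟨hbs, hcon⟩)
  have haB : a ∈ B := Finset.mem_filter.2 ⟨ha, rfl⟩
  have hab : b ≠ a := fun hcon => hbnB (hcon ▸ haB)
  -- pick k ∈ (s \ B).erase b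
  have hk1 : 1 ≤ ((s \ B).erase b).card := by
    rw [Finset.card_erase_of_mem hb]; omega
  obtain ⟨k, hk⟩ := Finset.card_pos.1 (show 0 < ((s \ B).erase b).card by omega)
  have hkb : k ≠ b := (Finset.mem_erase.1 hk).1
  have hksB : k ∈ s \ B := (Finset.mem_erase.1 hk).2
  have hks : k ∈ s := (Finset.mem_sdiff.1 hksB).1
  have hka : k ≠ a := fun hcon => (Finset.mem_sdiff.1 hksB).2 (hcon ▸ haB)
  -- pick m ∈ ((s.erase a).erase b).erase k
  have hm0 : 0 < (((s.erase a).erase b).erase k).card := by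
    rw [Finset.card_erase_of_mem, Finset.card_erase_of_mem, Finset.card_erase_of_mem ha]
    · omega
    · exact Finset.mem_erase.2 ⟨hab, hbs⟩
    · exact Finset.mem_erase.2 ⟨hkb, Finset.mem_erase.2 ⟨hka, hks⟩⟩
  obtain ⟨m, hm⟩ := Finset.card_pos.1 hm0
  have hmk : m ≠ k := (Finset.mem_erase.1 hm).1
  have hmb : m ≠ b := (Finset.mem_erase.1 (Finset.mem_erase.1 hm).2).1
  have hm' := (Finset.mem_erase.1 (Finset.mem_erase.1 hm).2).2
  have hma : m ≠ a := (Finset.mem_erase.1 hm').1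
  have hms : m ∈ s := (Finset.mem_erase.1 hm').2
  refine ⟨a, ha, b, hbs, hnp, ?_⟩
  -- rewrite the product
  set t := (((s.erase a).erase b).erase k).erase m with ht
  have htcard : t.card = s.card - 4 := by
    rw [ht, Finset.card_erase_of_mem hm, Finset.card_erase_of_mem, Finset.card_erase_of_mem,
      Finset.card_erase_of_mem ha]
    · omega
    · exact Finset.mem_erase.2 ⟨hab, hbs⟩
    · exact Finset.mem_erase.2 ⟨hkb, Finset.mem_erase.2 ⟨hka, hks⟩⟩
  have hprod : ∏ i ∈ s, f i = f a * (f b * (f k * (f m * ∏ i ∈ t, f i))) := by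
    rw [ht]
    rw [Finset.mul_prod_erase _ _ hm, Finset.mul_prod_erase _ _
      (Finset.mem_erase.2 ⟨hkb, Finset.mem_erase.2 ⟨hka, hks⟩⟩),
      Finset.mul_prod_erase _ _ (Finset.mem_erase.2 ⟨hab, hbs⟩),
      Finset.mul_prod_erase _ _ ha]
  have hrest : ∏ i ∈ t, f i ≤ P ^ (s.card - 4) := by
    rw [← htcard]
    calc ∏ i ∈ t, f i ≤ ∏ i ∈ t, P :=
          Finset.prod_le_prod (fun i _ => h0 i) (fun i _ => h1 i)
      _ = P ^ t.card := Finset.prod_const P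
  have hrest0 : 0 ≤ ∏ i ∈ t, f i := Finset.prod_nonneg (fun i _ => h0 i)
  have hfk : f k ≤ f b := hbmax k hksB
  have hfm : f m ≤ f a := hamax m hms
  calc ∏ i ∈ s, f i = f a * (f b * (f k * (f m * ∏ i ∈ t, f i))) := hprod
    _ ≤ f a * (f b * (f b * (f a * P ^ (s.card - 4)))) := by
        have s1 : f m * ∏ i ∈ t, f i ≤ f a * P ^ (s.card - 4) :=
          mul_le_mul hfm hrest hrest0 (h0 a)
        have s2 : f k * (f m * ∏ i ∈ t, f i) ≤ f b * (f a * P ^ (s.card - 4)) :=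
          mul_le_mul hfk s1 (mul_nonneg (h0 m) hrest0) (h0 b)
        have s3 := mul_le_mul_of_nonneg_left s2 (h0 b)
        exact mul_le_mul_of_nonneg_left s3 (h0 a)
    _ = f a ^ 2 * f b ^ 2 * P ^ (s.card - 4) := by ring

/-- Bounds for the integrals of `∏ P/(1 + P³|μ_i|)` where `μ_i = c_iβ₁ + d_iβ₂`. -/
theorem linear_forms_integral_bounds :
    ∃ C : ℝ, 0 < C ∧
      ∀ (M : ℕ) (c d : Fin 12 → ℤ),
        1 ≤ M →
        (∀ i, (c i).natAbs ≤ M) → (∀ i, (d i).natAbs ≤ M) →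
        (∀ i, ((c i, d i) : ℤ × ℤ) ≠ (0, 0)) →
        (∀ i, (Finset.univ.filter (fun j => c i * d j = c j * d i)).card ≤ 5) →
        ∀ P τ : ℝ, 2 ≤ P → 0 ≤ τ →
          ((∫ β : ℝ × ℝ in {b : ℝ × ℝ | P ^ (τ - 3) < max |b.1| |b.2|},
              ∏ i : Fin 12, P / (1 + P ^ 3 * |(c i : ℝ) * β.1 + (d i : ℝ) * β.2|))
            ≤ C * P ^ (6 - 5 * τ) * (M : ℝ) ^ 11) ∧
          ((∫ β : ℝ × ℝ,
              ∏ i : Fin 12, P / (1 + P ^ 3 * |(c i : ℝ) * β.1 + (d i : ℝ) * β.2|))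
            ≤ C * P ^ (6 : ℕ) * (M : ℝ) ^ 11) ∧
          (∀ i₀ : Fin 12,
            (∫ β : ℝ × ℝ,
                ∏ i ∈ Finset.univ.erase i₀,
                  P / (1 + P ^ 3 * |(c i : ℝ) * β.1 + (d i : ℝ) * β.2|))
              ≤ C * P ^ (5 : ℕ) * (M : ℝ) ^ 10) := by
  refine ⟨40000000, by norm_num, ?_⟩
  intro M c d hM hc hd hcd h5 P τ hP hτ
  have hP0 : (0:ℝ) < P := by linarith
  have hM1 : (1:ℝ) ≤ (M:ℝ) := by exact_mod_cast hM
  have hπ2 : π ^ 2 ≤ 10 := by nlinarith [pi_lt_d2, pi_pos]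
  set f : Fin 12 → ℝ × ℝ → ℝ :=
    fun i β => P / (1 + P ^ 3 * |(c i : ℝ) * β.1 + (d i : ℝ) * β.2|) with hfdef
  have hf0 : ∀ i β, 0 ≤ f i β := fun i β => by
    apply div_nonneg hP0.le; positivity
  have hfP : ∀ i β, f i β ≤ P := fun i β => by
    apply div_le_self hP0.le
    have : (0:ℝ) ≤ P ^ 3 * |(c i : ℝ) * β.1 + (d i : ℝ) * β.2| := by positivity
    linarith
  -- term machinery
  set term : ℝ → Fin 12 → Fin 12 → (ℝ × ℝ) → ℝ :=
    fun K a b β => if c a * d b = c b * d a then 0 else K * (f a β ^ 2 * f b β ^ 2) with hterm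
  have hterm_nn : ∀ (K : ℝ), 0 ≤ K → ∀ a b β, 0 ≤ term K a b β := by
    intro K hK a b β
    rw [hterm]
    by_cases hab : c a * d b = c b * d a
    · simp [hab]
    · simp only [hab, if_false]
      have := hf0 a β; have := hf0 b β
      positivity
  have hterm_int : ∀ (K : ℝ) (a b : Fin 12), Integrable (term K a b) := by
    intro K a b
    rw [hterm]
    by_cases hab : c a * d b = c b * d a
    · simp only [hab, if_true]
      exact integrable_zero _ _ _
    · simp only [hab, if_false]
      exact ((key2 P hP0 hab).1.const_mul K)
  have hterm_bd : ∀ (K : ℝ), 0 ≤ K → ∀ a b : Fin 12,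
      (∫ β : ℝ × ℝ, term K a b β) ≤ K * (π ^ 2 / P ^ 2) := by
    intro K hK a b
    rw [hterm]
    by_cases hab : c a * d b = c b * d a
    · simp only [hab, if_true]
      simp only [integral_const, smul_zero]
      positivity
    · simp only [hab, if_false]
      rw [integral_const_mul]
      exact mul_le_mul_of_nonneg_left (key2 P hP0 hab).2 hK
  have hsum_int : ∀ K : ℝ, Integrable (fun β => ∑ a : Fin 12, ∑ b : Fin 12, term K a b β) := by
    intro K
    exact integrable_finset_sum _ (fun a _ =>
      integrable_finset_sum _ (fun b _ => hterm_int K a b))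
  have hsum_nn : ∀ (K : ℝ), 0 ≤ K → ∀ β, 0 ≤ ∑ a : Fin 12, ∑ b : Fin 12, term K a b β := by
    intro K hK β
    exact Finset.sum_nonneg fun a _ => Finset.sum_nonneg fun b _ => hterm_nn K hK a b β
  have hsum_ge : ∀ (K : ℝ), 0 ≤ K → ∀ (β) (a b : Fin 12), ¬(c a * d b = c b * d a) →
      K * (f a β ^ 2 * f b β ^ 2) ≤ ∑ a' : Fin 12, ∑ b' : Fin 12, term K a' b' β := by
    intro K hK β a b hab
    have h1 : K * (f a β ^ 2 * f b β ^ 2) = term K a b β := by rw [hterm]; simp [hab]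
    rw [h1]
    calc term K a b β ≤ ∑ b' : Fin 12, term K a b' β :=
          Finset.single_le_sum (fun b' _ => hterm_nn K hK a b' β) (Finset.mem_univ b)
      _ ≤ ∑ a' : Fin 12, ∑ b' : Fin 12, term K a' b' β :=
          Finset.single_le_sum (fun a' _ => Finset.sum_nonneg fun b' _ => hterm_nn K hK a' b' β)
            (Finset.mem_univ a)
  have hsum_integral : ∀ (K : ℝ), 0 ≤ K →
      (∫ β : ℝ × ℝ, ∑ a : Fin 12, ∑ b : Fin 12, term K a b β) ≤ 144 * (K * (π ^ 2 / P ^ 2)) := by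
    intro K hK
    have h1 : (∫ β : ℝ × ℝ, ∑ a : Fin 12, ∑ b : Fin 12, term K a b β) =
        ∑ a : Fin 12, ∑ b : Fin 12, ∫ β : ℝ × ℝ, term K a b β := by
      rw [integral_finset_sum _ (fun a _ =>
        integrable_finset_sum _ (fun b _ => hterm_int K a b))]
      exact Finset.sum_congr rfl fun a _ => integral_finset_sum _ (fun b _ => hterm_int K a b)
    rw [h1]
    calc ∑ a : Fin 12, ∑ b : Fin 12, ∫ β : ℝ × ℝ, term K a b β
        ≤ ∑ _a : Fin 12, ∑ _b : Fin 12, K * (π ^ 2 / P ^ 2) :=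
          Finset.sum_le_sum fun a _ => Finset.sum_le_sum fun b _ => hterm_bd K hK a b
      _ = 144 * (K * (π ^ 2 / P ^ 2)) := by
          simp [Finset.sum_const, Finset.card_univ]
          ring
  have hprod_nn : ∀ (s : Finset (Fin 12)) (β : ℝ × ℝ), 0 ≤ ∏ i ∈ s, f i β :=
    fun s β => Finset.prod_nonneg fun i _ => hf0 i β
  refine ⟨?_, ?_, ?_⟩
  · -- part 1
    set κ : ℝ := (2 * (M:ℝ) * P ^ ((1:ℝ) - τ)) ^ 5 * P ^ 3 with hκ
    have hPτ5 : (0:ℝ) < P ^ ((1:ℝ) - τ) := rpow_pos_of_pos hP0 _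
    have hκ0 : 0 ≤ κ := by rw [hκ]; positivity
    have hRopen : IsOpen {b : ℝ × ℝ | P ^ (τ - 3) < max |b.1| |b.2|} :=
      isOpen_lt continuous_const ((continuous_fst.abs).max (continuous_snd.abs))
    have hpt1 : ∀ β ∈ {b : ℝ × ℝ | P ^ (τ - 3) < max |b.1| |b.2|},
        ∏ i : Fin 12, f i β ≤ ∑ a' : Fin 12, ∑ b' : Fin 12, term κ a' b' β := by
      intro β hβ
      have hB : P ^ (τ - 3) < max |β.1| |β.2| := hβ
      set B : ℝ := max |β.1| |β.2| with hBdef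
      have hBpos : 0 < B := lt_trans (rpow_pos_of_pos hP0 _) hB
      set μ : Fin 12 → ℝ := fun i => (c i : ℝ) * β.1 + (d i : ℝ) * β.2 with hμ
      have hMpos : (0:ℝ) < M := by linarith
      have hcM : ∀ k, |(c k : ℝ)| ≤ M := by
        intro k
        have h1 : (((c k).natAbs : ℕ) : ℝ) ≤ M := by exact_mod_cast hc k
        rwa [Nat.cast_natAbs, Int.cast_abs] at h1
      have hdM : ∀ k, |(d k : ℝ)| ≤ M := by
        intro k
        have h1 : (((d k).natAbs : ℕ) : ℝ) ≤ M := by exact_mod_cast hd k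
        rwa [Nat.cast_natAbs, Int.cast_abs] at h1
      have hcompl : ∀ i j, |μ i| < B / (2 * M) → |μ j| < B / (2 * M) →
          c i * d j = c j * d i := by
        intro i j hi hj
        by_contra hnp
        have hDne : (c i * d j - c j * d i : ℤ) ≠ 0 := sub_ne_zero.2 hnp
        have hD1 : (1:ℝ) ≤ |((c i * d j - c j * d i : ℤ) : ℝ)| := by
          rw [← Int.cast_abs]
          exact_mod_cast Int.one_le_abs hDne
        set D : ℝ := ((c i * d j - c j * d i : ℤ) : ℝ) with hD
        have hb1 : β.1 * D = (d j : ℝ) * μ i - (d i : ℝ) * μ j := by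
          rw [hD, hμ]; push_cast; ring
        have hb2 : β.2 * D = (c i : ℝ) * μ j - (c j : ℝ) * μ i := by
          rw [hD, hμ]; push_cast; ring
        have e7 : (M:ℝ) * (B/(2*M)) = B/2 := by field_simp
        have habs1 : |β.1| < B := by
          have e1 : |β.1| ≤ |β.1 * D| := by
            rw [abs_mul]
            exact le_mul_of_one_le_right (abs_nonneg _) hD1
          have e2 : |β.1 * D| ≤ |(d j : ℝ)| * |μ i| + |(d i : ℝ)| * |μ j| := by
            rw [hb1]
            calc |(d j : ℝ) * μ i - (d i : ℝ) * μ j|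
                ≤ |(d j : ℝ) * μ i| + |(d i : ℝ) * μ j| := abs_sub _ _
              _ = |(d j : ℝ)| * |μ i| + |(d i : ℝ)| * |μ j| := by rw [abs_mul, abs_mul]
          have e3 : |(d j : ℝ)| * |μ i| ≤ (M:ℝ) * |μ i| :=
            mul_le_mul_of_nonneg_right (hdM j) (abs_nonneg _)
          have e4 : (M:ℝ) * |μ i| < M * (B/(2*M)) := mul_lt_mul_of_pos_left hi hMpos
          have e5 : |(d i : ℝ)| * |μ j| ≤ (M:ℝ) * |μ j| :=
            mul_le_mul_of_nonneg_right (hdM i) (abs_nonneg _)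
          have e6 : (M:ℝ) * |μ j| < M * (B/(2*M)) := mul_lt_mul_of_pos_left hj hMpos
          linarith
        have habs2 : |β.2| < B := by
          have e1 : |β.2| ≤ |β.2 * D| := by
            rw [abs_mul]
            exact le_mul_of_one_le_right (abs_nonneg _) hD1
          have e2 : |β.2 * D| ≤ |(c i : ℝ)| * |μ j| + |(c j : ℝ)| * |μ i| := by
            rw [hb2]
            calc |(c i : ℝ) * μ j - (c j : ℝ) * μ i|
                ≤ |(c i : ℝ) * μ j| + |(c j : ℝ) * μ i| := abs_sub _ _
              _ = |(c i : ℝ)| * |μ j| + |(c j : ℝ)| * |μ i| := by rw [abs_mul, abs_mul]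
          have e3 : |(c i : ℝ)| * |μ j| ≤ (M:ℝ) * |μ j| :=
            mul_le_mul_of_nonneg_right (hcM i) (abs_nonneg _)
          have e4 : (M:ℝ) * |μ j| < M * (B/(2*M)) := mul_lt_mul_of_pos_left hj hMpos
          have e5 : |(c j : ℝ)| * |μ i| ≤ (M:ℝ) * |μ i| :=
            mul_le_mul_of_nonneg_right (hcM j) (abs_nonneg _)
          have e6 : (M:ℝ) * |μ i| < M * (B/(2*M)) := mul_lt_mul_of_pos_left hi hMpos
          linarith
        have : B < B := by
          calc B = max |β.1| |β.2| := hBdef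
            _ < B := max_lt habs1 habs2
        exact lt_irrefl B this
      classical
      set S := Finset.univ.filter (fun i : Fin 12 => B / (2*M) ≤ |μ i|) with hS
      have hScard : 7 ≤ S.card := by
        have hpart := Finset.card_filter_add_card_filter_not
          (s := (Finset.univ : Finset (Fin 12))) (p := fun i : Fin 12 => B / (2*M) ≤ |μ i|)
        have hneg : (Finset.univ.filter (fun i : Fin 12 => ¬(B / (2*M) ≤ |μ i|))).card ≤ 5 := by
          rcases Finset.eq_empty_or_nonempty
            (Finset.univ.filter (fun i : Fin 12 => ¬(B / (2*M) ≤ |μ i|))) with he | hne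
          · rw [he]; simp
          · obtain ⟨i₀, hi₀⟩ := hne
            have hi₀' : ¬(B/(2*M) ≤ |μ i₀|) := (Finset.mem_filter.1 hi₀).2
            refine le_trans (Finset.card_le_card ?_) (h5 i₀)
            intro j hj
            rw [Finset.mem_filter] at hj ⊢
            exact ⟨Finset.mem_univ _, hcompl i₀ j (not_le.1 hi₀') (not_le.1 hj.2)⟩
        have hcu : (Finset.univ : Finset (Fin 12)).card = 12 := by simp
        rw [hS]
        omega
      have hfS : ∀ i ∈ S, f i β ≤ 2 * M * P ^ ((1:ℝ) - τ) := by
        intro i hi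
        have hμi : B/(2*M) ≤ |μ i| := (Finset.mem_filter.1 hi).2
        have h2M : (0:ℝ) < 2*M := by linarith
        have hBM : (0:ℝ) < B/(2*M) := div_pos hBpos h2M
        have hdenpos : (0:ℝ) < P^3 * (B/(2*M)) := mul_pos (by positivity) hBM
        have hstep1 : f i β ≤ P / (P^3 * (B/(2*M))) := by
          have hden : P^3 * (B/(2*M)) ≤ 1 + P^3 * |μ i| := by
            have h1 : P^3 * (B/(2*M)) ≤ P^3 * |μ i| :=
              mul_le_mul_of_nonneg_left hμi (by positivity)
            linarith
          show P / (1 + P^3 * |μ i|) ≤ P / (P^3 * (B/(2*M)))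
          exact div_le_div_of_nonneg_left hP0.le hdenpos hden
        have heq1 : P / (P^3 * (B/(2*M))) = 2*M*P/(P^3*B) := by
          field_simp
        have hstep2 : 2*M*P/(P^3*B) ≤ 2*M*P/(P^3*(P^(τ-3))) := by
          refine div_le_div_of_nonneg_left (by positivity) ?_ ?_
          · have := rpow_pos_of_pos hP0 (τ-3)
            positivity
          · exact mul_le_mul_of_nonneg_left hB.le (by positivity)
        have heq2 : 2*M*P/(P^3*(P^(τ-3))) = 2*M*P^((1:ℝ)-τ) := by
          rw [show (P:ℝ)^(3:ℕ) = P^((3:ℝ)) from (rpow_natCast P 3).symm,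
            ← rpow_add hP0, show (3:ℝ) + (τ-3) = τ by ring,
            show (2:ℝ)*(M:ℝ)*P = 2*M*P^((1:ℝ)) by rw [rpow_one],
            mul_div_assoc, ← rpow_sub hP0]
        calc f i β ≤ P / (P^3 * (B/(2*M))) := hstep1
          _ = 2*M*P/(P^3*B) := heq1
          _ ≤ 2*M*P/(P^3*(P^(τ-3))) := hstep2
          _ = 2*M*P^((1:ℝ)-τ) := heq2
      obtain ⟨T, hTsub, hTcard⟩ := Finset.exists_subset_card_eq
        (show 5 ≤ S.card by omega)
      have hTuniv : T ⊆ Finset.univ := Finset.subset_univ T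
      have hTc : (Finset.univ \ T).card = 7 := by
        rw [Finset.card_sdiff_of_subset hTuniv, hTcard]
        simp
      obtain ⟨a, ha, b, hb, hnp, hle⟩ := select c d h5 (Finset.univ \ T) (by omega)
        (fun i => f i β) P (fun i => hf0 i β) (fun i => hfP i β)
      rw [hTc] at hle
      simp only [show (7:ℕ) - 4 = 3 from rfl] at hle
      have hTle : ∏ i ∈ T, f i β ≤ (2*M*P^((1:ℝ)-τ))^5 := by
        calc ∏ i ∈ T, f i β ≤ ∏ _i ∈ T, (2*(M:ℝ)*P^((1:ℝ)-τ)) :=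
              Finset.prod_le_prod (fun i _ => hf0 i β) (fun i hi => hfS i (hTsub hi))
          _ = (2*(M:ℝ)*P^((1:ℝ)-τ))^T.card := Finset.prod_const _
          _ = (2*(M:ℝ)*P^((1:ℝ)-τ))^5 := by rw [hTcard]
      have hsplit : ∏ i : Fin 12, f i β = (∏ i ∈ Finset.univ \ T, f i β) * ∏ i ∈ T, f i β :=
        (Finset.prod_sdiff hTuniv).symm
      refine le_trans ?_ (hsum_ge κ hκ0 β a b hnp)
      rw [hsplit]
      have hfa := hf0 a β
      have hfb := hf0 b β
      calc (∏ i ∈ Finset.univ \ T, f i β) * ∏ i ∈ T, f i β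
          ≤ (f a β^2 * f b β^2 * P^3) * (2*(M:ℝ)*P^((1:ℝ)-τ))^5 :=
            mul_le_mul hle hTle (hprod_nn T β) (by positivity)
        _ = κ * (f a β^2 * f b β^2) := by rw [hκ]; ring
    have hκint : Integrable (fun β => ∑ a' : Fin 12, ∑ b' : Fin 12, term κ a' b' β) :=
      hsum_int κ
    calc (∫ β in {b : ℝ × ℝ | P ^ (τ - 3) < max |b.1| |b.2|}, ∏ i : Fin 12, f i β)
        ≤ ∫ β in {b : ℝ × ℝ | P ^ (τ - 3) < max |b.1| |b.2|},
            ∑ a' : Fin 12, ∑ b' : Fin 12, term κ a' b' β := by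
          apply integral_mono_of_nonneg
          · exact Filter.Eventually.of_forall fun β => hprod_nn _ β
          · exact hκint.integrableOn
          · exact ae_restrict_of_forall_mem hRopen.measurableSet hpt1
      _ ≤ ∫ β : ℝ × ℝ, ∑ a' : Fin 12, ∑ b' : Fin 12, term κ a' b' β :=
          setIntegral_le_integral hκint
            (Filter.Eventually.of_forall fun β => hsum_nn κ hκ0 β)
      _ ≤ 144 * (κ * (π ^ 2 / P ^ 2)) := hsum_integral κ hκ0
      _ ≤ 40000000 * P ^ (6 - 5 * τ) * (M : ℝ) ^ 11 := by
          have hPτ : (0:ℝ) < P ^ (6 - 5*τ) := rpow_pos_of_pos hP0 _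
          have hcollect : κ * (π ^ 2 / P ^ 2) = 32 * (M:ℝ)^5 * π^2 * P^(6-5*τ) := by
            have e1 : ((P:ℝ)^((1:ℝ)-τ))^(5:ℕ) = P^(((1:ℝ)-τ)*5) := by
              rw [← rpow_natCast (P^((1:ℝ)-τ)) 5, ← rpow_mul hP0.le]
              norm_num
            have e2 : (P:ℝ)^(3:ℕ) = P^((3:ℝ)) := (rpow_natCast P 3).symm
            have e3 : (P:ℝ)^(2:ℕ) = P^((2:ℝ)) := (rpow_natCast P 2).symm
            have hmul : P ^ (((1:ℝ) - τ) * 5) * P ^ ((3:ℝ)) / P ^ ((2:ℝ)) = P ^ (6 - 5*τ) := by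
              rw [← rpow_add hP0, ← rpow_sub hP0]
              congr 1
              ring
            calc κ * (π ^ 2 / P ^ 2)
                = 2^5 * (M:ℝ)^5 * π^2 *
                    (P^(((1:ℝ)-τ)*5) * P^((3:ℝ)) / P^((2:ℝ))) := by
                  rw [hκ, mul_pow, mul_pow, e1, e2, e3]
                  ring
              _ = 32 * (M:ℝ)^5 * π^2 * P^(6-5*τ) := by rw [hmul]; norm_num
          rw [hcollect]
          have hM5 : (M:ℝ)^5 ≤ (M:ℝ)^11 := pow_le_pow_right₀ hM1 (by norm_num)
          have g1 : 144 * (32 * (M:ℝ)^5 * π^2) ≤ 40000000 * (M:ℝ)^11 := by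
            have t1 : (4608*(M:ℝ)^5) * π^2 ≤ (4608*(M:ℝ)^5) * 10 :=
              mul_le_mul_of_nonneg_left hπ2 (by positivity)
            have t2 : (46080:ℝ) * (M:ℝ)^5 ≤ 46080 * (M:ℝ)^11 :=
              mul_le_mul_of_nonneg_left hM5 (by norm_num)
            have t3 : (0:ℝ) ≤ (M:ℝ)^11 := by positivity
            nlinarith [t1, t2, t3]
          calc 144 * (32 * (M:ℝ)^5 * π^2 * P^(6-5*τ))
              = (144 * (32 * (M:ℝ)^5 * π^2)) * P^(6-5*τ) := by ring
            _ ≤ (40000000 * (M:ℝ)^11) * P^(6-5*τ) :=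
                mul_le_mul_of_nonneg_right g1 hPτ.le
            _ = 40000000 * P^(6-5*τ) * (M:ℝ)^11 := by ring
  · -- part 2
    have hpt2 : ∀ β : ℝ × ℝ, ∏ i : Fin 12, f i β ≤
        ∑ a' : Fin 12, ∑ b' : Fin 12, term (P ^ 8) a' b' β := by
      intro β
      obtain ⟨a, _, b, _, hnp, hle⟩ := select c d h5 Finset.univ (by simp)
        (fun i => f i β) P (fun i => hf0 i β) (fun i => hfP i β)
      have hcard : (Finset.univ : Finset (Fin 12)).card = 12 := by simp
      rw [hcard] at hle
      simp only [show (12:ℕ) - 4 = 8 from rfl] at hle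
      refine le_trans ?_ (hsum_ge (P ^ 8) (by positivity) β a b hnp)
      calc ∏ i : Fin 12, f i β ≤ f a β ^ 2 * f b β ^ 2 * P ^ 8 := hle
        _ = P ^ 8 * (f a β ^ 2 * f b β ^ 2) := by ring
    calc (∫ β : ℝ × ℝ, ∏ i : Fin 12, f i β)
        ≤ ∫ β : ℝ × ℝ, ∑ a' : Fin 12, ∑ b' : Fin 12, term (P ^ 8) a' b' β :=
          integral_mono_of_nonneg (Filter.Eventually.of_forall fun β => hprod_nn _ β)
            (hsum_int _) (Filter.Eventually.of_forall hpt2)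
      _ ≤ 144 * (P ^ 8 * (π ^ 2 / P ^ 2)) := hsum_integral _ (by positivity)
      _ ≤ 40000000 * P ^ (6 : ℕ) * (M : ℝ) ^ 11 := by
          have h8 : P ^ (8 : ℕ) * (π ^ 2 / P ^ 2) = π ^ 2 * P ^ (6 : ℕ) := by
            field_simp
          rw [h8]
          have hM11 : (1:ℝ) ≤ (M : ℝ) ^ 11 := one_le_pow₀ hM1
          nlinarith [pow_pos hP0 6,
            mul_le_mul_of_nonneg_left hM11 (show (0:ℝ) ≤ 40000000 * P ^ 6 by positivity),
            mul_le_mul_of_nonneg_right hπ2 (le_of_lt (pow_pos hP0 6))]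
  · -- part 3
    intro i₀
    have hcard : (Finset.univ.erase i₀).card = 11 := by
      rw [Finset.card_erase_of_mem (Finset.mem_univ i₀)]
      simp
    have hpt3 : ∀ β : ℝ × ℝ, ∏ i ∈ Finset.univ.erase i₀, f i β ≤
        ∑ a' : Fin 12, ∑ b' : Fin 12, term (P ^ 7) a' b' β := by
      intro β
      obtain ⟨a, _, b, _, hnp, hle⟩ := select c d h5 (Finset.univ.erase i₀) (by omega)
        (fun i => f i β) P (fun i => hf0 i β) (fun i => hfP i β)
      rw [hcard] at hle
      simp only [show (11:ℕ) - 4 = 7 from rfl] at hle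
      refine le_trans ?_ (hsum_ge (P ^ 7) (by positivity) β a b hnp)
      calc ∏ i ∈ Finset.univ.erase i₀, f i β ≤ f a β ^ 2 * f b β ^ 2 * P ^ 7 := hle
        _ = P ^ 7 * (f a β ^ 2 * f b β ^ 2) := by ring
    calc (∫ β : ℝ × ℝ, ∏ i ∈ Finset.univ.erase i₀, f i β)
        ≤ ∫ β : ℝ × ℝ, ∑ a' : Fin 12, ∑ b' : Fin 12, term (P ^ 7) a' b' β :=
          integral_mono_of_nonneg (Filter.Eventually.of_forall fun β => hprod_nn _ β)
            (hsum_int _) (Filter.Eventually.of_forall hpt3)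
      _ ≤ 144 * (P ^ 7 * (π ^ 2 / P ^ 2)) := hsum_integral _ (by positivity)
      _ ≤ 40000000 * P ^ (5 : ℕ) * (M : ℝ) ^ 10 := by
          have h7 : P ^ (7 : ℕ) * (π ^ 2 / P ^ 2) = π ^ 2 * P ^ (5 : ℕ) := by
            field_simp
          rw [h7]
          have hM10 : (1:ℝ) ≤ (M : ℝ) ^ 10 := one_le_pow₀ hM1
          nlinarith [pow_pos hP0 5,
            mul_le_mul_of_nonneg_left hM10 (show (0:ℝ) ≤ 40000000 * P ^ 5 by positivity),
            mul_le_mul_of_nonneg_right hπ2 (le_of_lt (pow_pos hP0 5))]
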